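/- For a weighted connected undirected hypergraph, if the Lin-Lu-Yau curvature satisfies κ(u,v) ≥ C for every well-transported pair {u,v} (a pair contained in a common hyperedge h with d(u,v) = w_h), then κ(x,y) ≥ C for every pair of vertices x, y ∈ V. -/

import Mathlib

open Finset Filter Topology

variable {V : Type*} [Fintype V] [DecidableEq V]

/-- A finite weighted undirected hypergraph with positive hyperedge weights. -/
structure UHyp (V : Type*) [Fintype V] [DecidableEq V] where
  E : Finset (Finset V)
  w : Finset V → ℝ
  pos : ∀ h ∈ E, 0 < w h

/-- `γ` is a hyperpath connecting `u` and `v`. -/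
def IsHyperpath (G : UHyp V) (γ : List (Finset V)) (u v : V) : Prop :=
  γ ≠ [] ∧ (∀ h ∈ γ, h ∈ G.E) ∧
  (∀ h0, γ.head? = some h0 → u ∈ h0) ∧
  (∀ hl, γ.getLast? = some hl → v ∈ hl) ∧
  List.Chain' (fun a b => (a ∩ b).Nonempty) γ

/-- Weighted hyperpath distance. -/
noncomputable def hdist (G : UHyp V) (u v : V) : ℝ :=
  if u = v then 0 else sInf {s | ∃ γ, IsHyperpath G γ u v ∧ s = (γ.map G.w).sum}

/-- Connectedness: any two distinct vertices are joined by a hyperpath. -/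
def UConnected (G : UHyp V) : Prop :=
  ∀ u v : V, u ≠ v → ∃ γ, IsHyperpath G γ u v

/-- Weighted degree of a vertex. -/
noncomputable def Deg (G : UHyp V) (x : V) : ℝ :=
  ∑ h ∈ G.E.filter (fun h => x ∈ h), G.w h

open Classical in
/-- The lazy random-walk probability measure `μ_x^α`. -/
noncomputable def mu (G : UHyp V) (α : ℝ) (x : V) (z : V) : ℝ :=
  if z = x then α
  else if (∃ h ∈ G.E, x ∈ h ∧ z ∈ h) then
    (1 - α) * ∑ h ∈ G.E.filter (fun h => x ∈ h ∧ z ∈ h),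
      (1 / ((h.card : ℝ) - 1)) * G.w h / Deg G x
  else 0

/-- `π` is a coupling of `μ` and `ν`. -/
def IsCoupling (μ ν : V → ℝ) (π : V → V → ℝ) : Prop :=
  (∀ u v, 0 ≤ π u v) ∧ (∀ u, ∑ v, π u v = μ u) ∧ (∀ v, ∑ u, π u v = ν v)

/-- The 1-Wasserstein functional associated to a cost `d`. -/
noncomputable def Wd (d : V → V → ℝ) (μ ν : V → ℝ) : ℝ :=
  sInf {s | ∃ π, IsCoupling μ ν π ∧ s = ∑ u, ∑ v, π u v * d u v}

/-- The 1-Wasserstein distance on a hypergraph. -/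
noncomputable def W1 (G : UHyp V) (μ ν : V → ℝ) : ℝ :=
  Wd (hdist G) μ ν

/-- Ollivier–Ricci curvature `κ_α(u,v)` between two vertices. -/
noncomputable def kappaV (G : UHyp V) (α : ℝ) (u v : V) : ℝ :=
  1 - W1 G (mu G α u) (mu G α v) / hdist G u v

/-- Length `L(h)` of a hyperedge: minimal pairwise distance within `h`. -/
noncomputable def Lh (G : UHyp V) (h : Finset V) : ℝ :=
  sInf {s | ∃ x ∈ h, ∃ y ∈ h, x ≠ y ∧ s = hdist G x y}

/-- `W_α(h)`: the sum of pairwise Wasserstein distances over vertices of `h`. -/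
noncomputable def Wedge {V : Type*} [Fintype V] [LinearOrder V] (G : UHyp V) (α : ℝ)
    (h : Finset V) : ℝ :=
  ∑ p ∈ (h ×ˢ h).filter (fun p => p.1 < p.2), W1 G (mu G α p.1) (mu G α p.2)

/-- Ollivier–Ricci curvature `κ_α(h)` of a hyperedge. -/
noncomputable def kappaE {V : Type*} [Fintype V] [LinearOrder V] (G : UHyp V) (α : ℝ)
    (h : Finset V) : ℝ :=
  1 - Wedge G α h / Lh G h

/-- Maximal hyperedge weight `max_{h∈H} w_h`. -/
noncomputable def maxW (G : UHyp V) : ℝ :=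
  sSup {x | ∃ h ∈ G.E, x = G.w h}
section HdistAux
variable {V : Type*} [Fintype V] [DecidableEq V]

lemma path_sum_pos (G : UHyp V) {γ : List (Finset V)} (hne : γ ≠ [])
    (hE : ∀ h ∈ γ, h ∈ G.E) : 0 < (γ.map G.w).sum := by
  match γ, hne with
  | h :: t, _ =>
    simp only [List.map_cons, List.sum_cons]
    have h1 : 0 < G.w h := G.pos h (hE h (by simp))
    have h2 : 0 ≤ (t.map G.w).sum := by
      apply List.sum_nonneg
      intro x hx
      obtain ⟨a, ha, rfl⟩ := List.mem_map.1 hx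
      exact (G.pos a (hE a (by simp [ha]))).le
    linarith

lemma hdist_self (G : UHyp V) (u : V) : hdist G u u = 0 := by simp [hdist]

lemma hdist_nonneg (G : UHyp V) (u v : V) : 0 ≤ hdist G u v := by
  unfold hdist
  split
  · exact le_refl 0
  · exact Real.sInf_nonneg (by
      rintro s ⟨γ, hγ, rfl⟩
      exact (path_sum_pos G hγ.1 hγ.2.1).le)

lemma hdist_le_path (G : UHyp V) {γ : List (Finset V)} {u v : V}
    (hγ : IsHyperpath G γ u v) : hdist G u v ≤ (γ.map G.w).sum := by
  by_cases huv : u = v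
  · rw [huv, hdist_self]; exact (path_sum_pos G hγ.1 hγ.2.1).le
  · unfold hdist
    rw [if_neg huv]
    exact csInf_le ⟨0, by rintro s ⟨γ', hγ', rfl⟩; exact (path_sum_pos G hγ'.1 hγ'.2.1).le⟩
      ⟨γ, hγ, rfl⟩

lemma single_hyperpath (G : UHyp V) {h : Finset V} {u v : V} (hE : h ∈ G.E)
    (hu : u ∈ h) (hv : v ∈ h) : IsHyperpath G [h] u v := by
  refine ⟨by simp, by simpa using hE, ?_, ?_, List.isChain_singleton _⟩
  · intro h0 hh0; simp at hh0; subst hh0; exact hu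
  · intro hl hhl; simp at hhl; subst hhl; exact hv

lemma hdist_le_w (G : UHyp V) {h : Finset V} {u v : V} (hE : h ∈ G.E)
    (hu : u ∈ h) (hv : v ∈ h) : hdist G u v ≤ G.w h := by
  have := hdist_le_path G (single_hyperpath G hE hu hv)
  simpa using this

lemma hyperpath_append (G : UHyp V) {γ1 γ2 : List (Finset V)} {a b c : V}
    (h1 : IsHyperpath G γ1 a b) (h2 : IsHyperpath G γ2 b c) :
    IsHyperpath G (γ1 ++ γ2) a c := by
  obtain ⟨hne1, hE1, hh1, hl1, hc1⟩ := h1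
  obtain ⟨hne2, hE2, hh2, hl2, hc2⟩ := h2
  refine ⟨by simp [hne1], ?_, ?_, ?_, ?_⟩
  · intro h hh; rcases List.mem_append.1 hh with h' | h'
    · exact hE1 h h'
    · exact hE2 h h'
  · intro h0 hh0
    rw [List.head?_append_of_ne_nil _ hne1] at hh0
    exact hh1 h0 hh0
  · intro hl hhl
    rw [List.getLast?_append_of_ne_nil _ hne2] at hhl
    exact hl2 hl hhl
  · apply hc1.append hc2
    intro x hx y hy
    exact ⟨b, Finset.mem_inter.2 ⟨hl1 x hx, hh2 y hy⟩⟩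

lemma hdist_triangle (G : UHyp V) (hconn : UConnected G) (a b c : V) :
    hdist G a c ≤ hdist G a b + hdist G b c := by
  by_cases hab : a = b
  · subst hab; rw [hdist_self]; linarith [le_refl (hdist G a c)]
  by_cases hbc : b = c
  · subst hbc; rw [hdist_self]; linarith [le_refl (hdist G a b)]
  by_cases hac : a = c
  · have h0 : hdist G a c = 0 := by rw [hac, hdist_self]
    have := hdist_nonneg G a b; have := hdist_nonneg G b c; linarith
  -- general case
  have key : ∀ s1 ∈ {s | ∃ γ, IsHyperpath G γ a b ∧ s = (γ.map G.w).sum},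
      ∀ s2 ∈ {s | ∃ γ, IsHyperpath G γ b c ∧ s = (γ.map G.w).sum},
      hdist G a c ≤ s1 + s2 := by
    rintro s1 ⟨γ1, hγ1, rfl⟩ s2 ⟨γ2, hγ2, rfl⟩
    have := hdist_le_path G (hyperpath_append G hγ1 hγ2)
    simpa using this
  have hne1 : {s | ∃ γ, IsHyperpath G γ a b ∧ s = (γ.map G.w).sum}.Nonempty := by
    obtain ⟨γ, hγ⟩ := hconn a b hab; exact ⟨_, γ, hγ, rfl⟩
  have hne2 : {s | ∃ γ, IsHyperpath G γ b c ∧ s = (γ.map G.w).sum}.Nonempty := by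
    obtain ⟨γ, hγ⟩ := hconn b c hbc; exact ⟨_, γ, hγ, rfl⟩
  have step1 : ∀ s2 ∈ {s | ∃ γ, IsHyperpath G γ b c ∧ s = (γ.map G.w).sum},
      hdist G a c - s2 ≤ sInf {s | ∃ γ, IsHyperpath G γ a b ∧ s = (γ.map G.w).sum} := by
    intro s2 hs2
    exact le_csInf hne1 (fun s1 hs1 => by linarith [key s1 hs1 s2 hs2])
  have step2 : hdist G a c - sInf {s | ∃ γ, IsHyperpath G γ a b ∧ s = (γ.map G.w).sum}
      ≤ sInf {s | ∃ γ, IsHyperpath G γ b c ∧ s = (γ.map G.w).sum} :=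
    le_csInf hne2 (fun s2 hs2 => by linarith [step1 s2 hs2])
  set D := hdist G a c with hD
  have eab : hdist G a b = sInf {s | ∃ γ, IsHyperpath G γ a b ∧ s = (γ.map G.w).sum} := by
    rw [hdist, if_neg hab]
  have ebc : hdist G b c = sInf {s | ∃ γ, IsHyperpath G γ b c ∧ s = (γ.map G.w).sum} := by
    rw [hdist, if_neg hbc]
  rw [eab, ebc]
  linarith [step2]

end HdistAux
section OptPath
variable {V : Type*} [Fintype V] [DecidableEq V]

lemma exists_optimal_path (G : UHyp V) (hconn : UConnected G) {x y : V} (hxy : x ≠ y) :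
    ∃ γ, IsHyperpath G γ x y ∧ (γ.map G.w).sum = hdist G x y := by
  classical
  set S : Set ℝ := {s | ∃ γ, IsHyperpath G γ x y ∧ s = (γ.map G.w).sum} with hS
  have hdxy : hdist G x y = sInf S := by rw [hdist, if_neg hxy]
  obtain ⟨γ0, hγ0⟩ := hconn x y hxy
  have hs0 : (γ0.map G.w).sum ∈ S := ⟨γ0, hγ0, rfl⟩
  set s0 := (γ0.map G.w).sum with hs0def
  -- E is nonempty
  have hEne : G.E.Nonempty := by
    obtain ⟨h, t⟩ := List.exists_cons_of_ne_nil hγ0.1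
    obtain ⟨t', ht'⟩ := t
    exact ⟨h, hγ0.2.1 h (by rw [ht']; simp)⟩
  set wmin := G.E.inf' hEne G.w with hwmin
  have hwminpos : 0 < wmin := by
    rw [hwmin, Finset.lt_inf'_iff]
    exact fun h hh => G.pos h hh
  set n := ⌈s0 / wmin⌉₊ with hn
  -- any path with sum ≤ s0 has length ≤ n
  have hlen : ∀ γ : List (Finset V), (∀ h ∈ γ, h ∈ G.E) → (γ.map G.w).sum ≤ s0 →
      γ.length ≤ n := by
    intro γ hE hsum
    have h1 : (γ.map G.w).length • wmin ≤ (γ.map G.w).sum := by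
      apply List.card_nsmul_le_sum
      intro a ha
      obtain ⟨h, hh, rfl⟩ := List.mem_map.1 ha
      exact Finset.inf'_le G.w (hE h hh)
    rw [List.length_map, nsmul_eq_mul] at h1
    have h2 : (γ.length : ℝ) ≤ s0 / wmin := by
      rw [le_div_iff₀ hwminpos]; linarith
    calc γ.length ≤ ⌈(γ.length : ℝ)⌉₊ := by simp
      _ ≤ n := Nat.ceil_le_ceil h2
  -- the truncated set is finite
  have hTfin : ((fun l : List (Finset V) => (l.map G.w).sum) ''
      {l | l.length ≤ n}).Finite :=
    (List.finite_length_le (Finset V) n).image _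
  set U : Set ℝ := S ∩ {s | s ≤ s0} with hU
  have hUfin : U.Finite := by
    apply hTfin.subset
    rintro s ⟨⟨γ, hγ, rfl⟩, hle⟩
    exact ⟨γ, hlen γ hγ.2.1 hle, rfl⟩
  have hUne : U.Nonempty := ⟨s0, hs0, le_refl s0⟩
  have hmem : sInf U ∈ U := hUne.csInf_mem hUfin
  set m := sInf U with hm
  have hmleS : ∀ s ∈ S, m ≤ s := by
    intro s hs
    by_cases hcase : s ≤ s0
    · exact csInf_le hUfin.bddBelow ⟨hs, hcase⟩
    · have : m ≤ s0 := hmem.2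
      linarith
  have hSbdd : BddBelow S := ⟨m, fun s hs => hmleS s hs⟩
  have : sInf S = m := le_antisymm (csInf_le hSbdd hmem.1) (le_csInf ⟨s0, hs0⟩ hmleS)
  obtain ⟨γ, hγ, hγsum⟩ := hmem.1
  exact ⟨γ, hγ, by rw [hdxy, this, hγsum]⟩

end OptPath
section Mass
variable {V : Type*} [Fintype V] [DecidableEq V]

open Classical in
noncomputable def cxz (G : UHyp V) (x z : V) : ℝ :=
  ∑ h ∈ G.E.filter (fun h => x ∈ h ∧ z ∈ h), (1 / ((h.card : ℝ) - 1)) * G.w h / Deg G x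

noncomputable def Tm (G : UHyp V) (x : V) : ℝ := ∑ z ∈ Finset.univ.erase x, cxz G x z

lemma Deg_nonneg (G : UHyp V) (x : V) : 0 ≤ Deg G x := by
  apply Finset.sum_nonneg
  intro h hh
  exact (G.pos h (Finset.mem_filter.1 hh).1).le

lemma cxz_nonneg (G : UHyp V) (x z : V) (hzx : z ≠ x) : 0 ≤ cxz G x z := by
  classical
  apply Finset.sum_nonneg
  intro h hh
  obtain ⟨hE, hx, hz⟩ : h ∈ G.E ∧ x ∈ h ∧ z ∈ h := by
    have := Finset.mem_filter.1 hh; exact ⟨this.1, this.2⟩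
  have hcard : 1 < h.card := Finset.one_lt_card.2 ⟨x, hx, z, hz, fun e => hzx e.symm⟩
  have h1 : (0:ℝ) < (h.card : ℝ) - 1 := by
    have : (1:ℝ) < (h.card : ℝ) := by exact_mod_cast hcard
    linarith
  have h2 := G.pos h hE
  have h3 := Deg_nonneg G x
  apply div_nonneg _ h3
  positivity

lemma mu_off (G : UHyp V) (α : ℝ) (x z : V) (hz : z ≠ x) :
    mu G α x z = (1 - α) * cxz G x z := by
  classical
  rw [mu, if_neg hz]
  by_cases hex : ∃ h ∈ G.E, x ∈ h ∧ z ∈ h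
  · rw [if_pos hex, cxz]
  · rw [if_neg hex, cxz]
    have : G.E.filter (fun h => x ∈ h ∧ z ∈ h) = ∅ := by
      apply Finset.filter_eq_empty_iff.2
      intro h hh hc
      exact hex ⟨h, hh, hc⟩
    rw [this]
    simp

lemma mu_self (G : UHyp V) (α : ℝ) (x : V) : mu G α x x = α := by rw [mu, if_pos rfl]

lemma mu_nonneg (G : UHyp V) {α : ℝ} (hα : α ∈ Set.Icc (0:ℝ) 1) (x z : V) :
    0 ≤ mu G α x z := by
  by_cases hz : z = x
  · rw [hz, mu_self]; exact hα.1
  · rw [mu_off G α x z hz]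
    have := cxz_nonneg G x z hz
    nlinarith [hα.2]

lemma Tm_nonneg (G : UHyp V) (x : V) : 0 ≤ Tm G x := by
  apply Finset.sum_nonneg
  intro z hz
  exact cxz_nonneg G x z (Finset.ne_of_mem_erase hz)

lemma mass_eq (G : UHyp V) (α : ℝ) (x : V) :
    ∑ z, mu G α x z = α + (1 - α) * Tm G x := by
  classical
  rw [← Finset.add_sum_erase Finset.univ _ (Finset.mem_univ x), mu_self]
  congr 1
  rw [Tm, Finset.mul_sum]
  apply Finset.sum_congr rfl
  intro z hz
  exact mu_off G α x z (Finset.ne_of_mem_erase hz)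

lemma mass_pos (G : UHyp V) {α : ℝ} (hα : α ∈ Set.Ioo (0:ℝ) 1) (x : V) :
    0 < ∑ z, mu G α x z := by
  rw [mass_eq]
  have := Tm_nonneg G x
  nlinarith [hα.1, hα.2]

end Mass
section Wass
variable {V : Type*} [Fintype V] [DecidableEq V]

lemma cost_nonneg {d : V → V → ℝ} (hd : ∀ u v, 0 ≤ d u v) {π : V → V → ℝ}
    (hπ : ∀ u v, 0 ≤ π u v) : 0 ≤ ∑ u, ∑ v, π u v * d u v :=
  Finset.sum_nonneg fun u _ => Finset.sum_nonneg fun v _ => mul_nonneg (hπ u v) (hd u v)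

lemma Wd_bddBelow {d : V → V → ℝ} (hd : ∀ u v, 0 ≤ d u v) (μ ν : V → ℝ) :
    BddBelow {s | ∃ π, IsCoupling μ ν π ∧ s = ∑ u, ∑ v, π u v * d u v} := by
  refine ⟨0, ?_⟩
  rintro s ⟨π, hπ, rfl⟩
  exact cost_nonneg hd hπ.1

lemma Wd_le_cost {d : V → V → ℝ} (hd : ∀ u v, 0 ≤ d u v) {μ ν : V → ℝ} {π : V → V → ℝ}
    (hπ : IsCoupling μ ν π) : Wd d μ ν ≤ ∑ u, ∑ v, π u v * d u v :=
  csInf_le (Wd_bddBelow hd μ ν) ⟨π, hπ, rfl⟩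

lemma exists_coupling {μ ν : V → ℝ} (hμ : ∀ z, 0 ≤ μ z) (hν : ∀ z, 0 ≤ ν z)
    (hm : ∑ z, μ z = ∑ z, ν z) (hpos : 0 < ∑ z, μ z) :
    ∃ π, IsCoupling μ ν π := by
  set m := ∑ z, μ z with hmdef
  have hm0 : m ≠ 0 := ne_of_gt hpos
  refine ⟨fun a b => μ a * ν b / m, ?_, ?_, ?_⟩
  · intro a b; exact div_nonneg (mul_nonneg (hμ a) (hν b)) hpos.le
  · intro a
    rw [← Finset.sum_div, ← Finset.mul_sum, ← hm]
    rw [mul_div_assoc, div_self hm0, mul_one]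
  · intro b
    rw [← Finset.sum_div, ← Finset.sum_mul, ← hmdef]
    rw [mul_comm, mul_div_assoc, div_self hm0, mul_one]

lemma glue_coupling {d : V → V → ℝ} (hd : ∀ u v, 0 ≤ d u v)
    (hdtri : ∀ a b c, d a c ≤ d a b + d b c)
    {μ ν ξ : V → ℝ} {π1 π2 : V → V → ℝ}
    (h1 : IsCoupling μ ν π1) (h2 : IsCoupling ν ξ π2) :
    ∃ π, IsCoupling μ ξ π ∧
      ∑ u, ∑ v, π u v * d u v ≤
        (∑ u, ∑ v, π1 u v * d u v) + (∑ u, ∑ v, π2 u v * d u v) := by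
  classical
  obtain ⟨h1n, h1r, h1c⟩ := h1
  obtain ⟨h2n, h2r, h2c⟩ := h2
  have hνnn : ∀ b, 0 ≤ ν b := fun b => by
    rw [← h1c b]; exact Finset.sum_nonneg fun a _ => h1n a b
  have hz1 : ∀ b, ν b = 0 → ∀ a, π1 a b = 0 := by
    intro b hb a
    have := (Finset.sum_eq_zero_iff_of_nonneg (fun a _ => h1n a b)).1 (by rw [h1c b, hb])
    exact this a (Finset.mem_univ a)
  have hz2 : ∀ b, ν b = 0 → ∀ c, π2 b c = 0 := by
    intro b hb c
    have := (Finset.sum_eq_zero_iff_of_nonneg (fun c _ => h2n b c)).1 (by rw [h2r b, hb])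
    exact this c (Finset.mem_univ c)
  set t : V → V → V → ℝ := fun a b c => if ν b = 0 then 0 else π1 a b * π2 b c / ν b with ht
  have htnn : ∀ a b c, 0 ≤ t a b c := by
    intro a b c
    simp only [ht]
    split
    · exact le_refl 0
    · exact div_nonneg (mul_nonneg (h1n a b) (h2n b c)) (hνnn b)
  have hsum_c : ∀ a b, ∑ c, t a b c = π1 a b := by
    intro a b
    by_cases hb : ν b = 0
    · simp [ht, hb, hz1 b hb a]
    · calc ∑ c, t a b c = ∑ c, π1 a b * π2 b c / ν b := by simp [ht, hb]
        _ = π1 a b * (∑ c, π2 b c) / ν b := by rw [← Finset.sum_div, ← Finset.mul_sum]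
        _ = π1 a b * ν b / ν b := by rw [h2r b]
        _ = π1 a b := by rw [mul_div_assoc, div_self hb, mul_one]
  have hsum_a : ∀ b c, ∑ a, t a b c = π2 b c := by
    intro b c
    by_cases hb : ν b = 0
    · simp [ht, hb, hz2 b hb c]
    · calc ∑ a, t a b c = ∑ a, π1 a b * (π2 b c / ν b) := by
            simp [ht, hb, mul_div_assoc]
        _ = (∑ a, π1 a b) * (π2 b c / ν b) := by rw [← Finset.sum_mul]
        _ = ν b * (π2 b c / ν b) := by rw [h1c b]
        _ = π2 b c := by field_simp
  refine ⟨fun a c => ∑ b, t a b c, ⟨?_, ?_, ?_⟩, ?_⟩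
  · intro a c; exact Finset.sum_nonneg fun b _ => htnn a b c
  · intro a
    rw [Finset.sum_comm]
    calc ∑ b, ∑ c, t a b c = ∑ b, π1 a b := by
          exact Finset.sum_congr rfl fun b _ => hsum_c a b
      _ = μ a := h1r a
  · intro c
    rw [Finset.sum_comm]
    calc ∑ b, ∑ a, t a b c = ∑ b, π2 b c := by
          exact Finset.sum_congr rfl fun b _ => hsum_a b c
      _ = ξ c := h2c c
  · calc ∑ a, ∑ c, (∑ b, t a b c) * d a c
        = ∑ a, ∑ c, ∑ b, t a b c * d a c := by
          refine Finset.sum_congr rfl fun a _ => Finset.sum_congr rfl fun c _ => ?_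
          rw [Finset.sum_mul]
      _ ≤ ∑ a, ∑ c, ∑ b, t a b c * (d a b + d b c) := by
          refine Finset.sum_le_sum fun a _ => Finset.sum_le_sum fun c _ =>
            Finset.sum_le_sum fun b _ => ?_
          exact mul_le_mul_of_nonneg_left (hdtri a b c) (htnn a b c)
      _ = (∑ a, ∑ c, ∑ b, t a b c * d a b) + (∑ a, ∑ c, ∑ b, t a b c * d b c) := by
          simp only [mul_add, Finset.sum_add_distrib]
      _ = (∑ u, ∑ v, π1 u v * d u v) + (∑ u, ∑ v, π2 u v * d u v) := by
          congr 1
          · calc ∑ a, ∑ c, ∑ b, t a b c * d a b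
                = ∑ a, ∑ b, ∑ c, t a b c * d a b := by
                  exact Finset.sum_congr rfl fun a _ => Finset.sum_comm
              _ = ∑ a, ∑ b, π1 a b * d a b := by
                  refine Finset.sum_congr rfl fun a _ => Finset.sum_congr rfl fun b _ => ?_
                  rw [← Finset.sum_mul, hsum_c a b]
          · calc ∑ a, ∑ c, ∑ b, t a b c * d b c
                = ∑ a, ∑ b, ∑ c, t a b c * d b c :=
                  Finset.sum_congr rfl fun a _ => Finset.sum_comm
              _ = ∑ b, ∑ a, ∑ c, t a b c * d b c := Finset.sum_comm
              _ = ∑ b, ∑ c, ∑ a, t a b c * d b c :=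
                  Finset.sum_congr rfl fun b _ => Finset.sum_comm
              _ = ∑ b, ∑ c, π2 b c * d b c := by
                  refine Finset.sum_congr rfl fun b _ => Finset.sum_congr rfl fun c _ => ?_
                  rw [← Finset.sum_mul, hsum_a b c]

lemma Wd_triangle {d : V → V → ℝ} (hd : ∀ u v, 0 ≤ d u v)
    (hdtri : ∀ a b c, d a c ≤ d a b + d b c)
    {μ ν ξ : V → ℝ} (h1 : ∃ π, IsCoupling μ ν π) (h2 : ∃ π, IsCoupling ν ξ π) :
    Wd d μ ξ ≤ Wd d μ ν + Wd d ν ξ := by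
  have hne1 : {s | ∃ π, IsCoupling μ ν π ∧ s = ∑ u, ∑ v, π u v * d u v}.Nonempty := by
    obtain ⟨π, hπ⟩ := h1; exact ⟨_, π, hπ, rfl⟩
  have hne2 : {s | ∃ π, IsCoupling ν ξ π ∧ s = ∑ u, ∑ v, π u v * d u v}.Nonempty := by
    obtain ⟨π, hπ⟩ := h2; exact ⟨_, π, hπ, rfl⟩
  have key : ∀ s1 ∈ {s | ∃ π, IsCoupling μ ν π ∧ s = ∑ u, ∑ v, π u v * d u v},
      ∀ s2 ∈ {s | ∃ π, IsCoupling ν ξ π ∧ s = ∑ u, ∑ v, π u v * d u v},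
      Wd d μ ξ ≤ s1 + s2 := by
    rintro s1 ⟨π1, hπ1, rfl⟩ s2 ⟨π2, hπ2, rfl⟩
    obtain ⟨π, hπ, hcost⟩ := glue_coupling hd hdtri hπ1 hπ2
    exact le_trans (Wd_le_cost hd hπ) hcost
  have step1 : ∀ s2 ∈ {s | ∃ π, IsCoupling ν ξ π ∧ s = ∑ u, ∑ v, π u v * d u v},
      Wd d μ ξ - s2 ≤ Wd d μ ν := by
    intro s2 hs2
    exact le_csInf hne1 fun s1 hs1 => by linarith [key s1 hs1 s2 hs2]
  have step2 : Wd d μ ξ - Wd d μ ν ≤ Wd d ν ξ :=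
    le_csInf hne2 fun s2 hs2 => by linarith [step1 s2 hs2]
  linarith

end Wass
section Limits
variable {V : Type*} [Fintype V] [DecidableEq V]

lemma F_neBot : (nhdsWithin (1:ℝ) (Set.Ico (0:ℝ) 1)).NeBot := by
  rw [← mem_closure_iff_nhdsWithin_neBot, closure_Ico (by norm_num : (0:ℝ) ≠ 1)]
  exact ⟨by norm_num, le_refl 1⟩

lemma tendsto_one_div_atTop :
    Tendsto (fun α : ℝ => 1 / (1 - α)) (nhdsWithin (1:ℝ) (Set.Ico (0:ℝ) 1)) atTop := by
  have h1 : Tendsto (fun α : ℝ => 1 - α) (nhdsWithin (1:ℝ) (Set.Ico (0:ℝ) 1))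
      (nhdsWithin (0:ℝ) (Set.Ioi 0)) := by
    rw [tendsto_nhdsWithin_iff]
    constructor
    · have h : Tendsto (fun α : ℝ => 1 - α) (nhds 1) (nhds (1 - 1)) :=
        ((continuous_const.sub continuous_id').tendsto (1:ℝ))
      simp only [sub_self] at h
      exact h.mono_left nhdsWithin_le_nhds
    · filter_upwards [self_mem_nhdsWithin] with α hα
      exact sub_pos.2 hα.2
  simpa [one_div, Function.comp_def] using tendsto_inv_nhdsGT_zero.comp h1

lemma Tm_eq_of_tendsto (G : UHyp V) {u v : V} (huv : u ≠ v) {k : ℝ}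
    (hKuv : Tendsto (fun α => kappaV G α u v / (1 - α))
      (nhdsWithin (1:ℝ) (Set.Ico (0:ℝ) 1)) (nhds k)) :
    Tm G u = Tm G v := by
  by_contra hne
  have hempty : ∀ α : ℝ, α ∈ Set.Ico (0:ℝ) 1 →
      {s | ∃ π, IsCoupling (mu G α u) (mu G α v) π ∧
        s = ∑ a, ∑ b, π a b * hdist G a b} = ∅ := by
    intro α hα
    rw [Set.eq_empty_iff_forall_notMem]
    rintro s ⟨π, ⟨hn, hr, hc⟩, rfl⟩
    have hmm : ∑ z, mu G α u z = ∑ z, mu G α v z := by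
      calc ∑ z, mu G α u z = ∑ a, ∑ b, π a b := by
            exact (Finset.sum_congr rfl fun a _ => (hr a).symm)
        _ = ∑ b, ∑ a, π a b := Finset.sum_comm
        _ = ∑ z, mu G α v z := Finset.sum_congr rfl fun b _ => hc b
    rw [mass_eq, mass_eq] at hmm
    have h1α : (1:ℝ) - α ≠ 0 := by
      have := hα.2; intro hc'; apply hne; nlinarith [hmm]
    apply hne
    have := mul_left_cancel₀ h1α (by linarith [hmm] : (1 - α) * Tm G u = (1 - α) * Tm G v)
    exact this
  have heq : ∀ᶠ α in nhdsWithin (1:ℝ) (Set.Ico (0:ℝ) 1),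
      kappaV G α u v / (1 - α) = 1 / (1 - α) := by
    filter_upwards [self_mem_nhdsWithin] with α hα
    have : W1 G (mu G α u) (mu G α v) = 0 := by
      rw [W1, Wd, hempty α hα, Real.sInf_empty]
    rw [kappaV, this, zero_div, sub_zero]
  have hatTop : Tendsto (fun α => kappaV G α u v / (1 - α))
      (nhdsWithin (1:ℝ) (Set.Ico (0:ℝ) 1)) atTop :=
    tendsto_one_div_atTop.congr' (heq.mono fun α h => h.symm)
  haveI := F_neBot
  exact not_tendsto_nhds_of_tendsto_atTop hatTop k hKuv

end Limits
section Main
variable {V : Type*} [Fintype V] [DecidableEq V]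

lemma curvature_combine (G : UHyp V) (hconn : UConnected G) {x z y : V}
    (hxz : x ≠ z) (hzy : z ≠ y)
    (hcpl : ∀ α ∈ Set.Ioo (0:ℝ) 1, ∀ u v : V,
      ∃ π, IsCoupling (mu G α u) (mu G α v) π)
    (hD : hdist G x y = hdist G x z + hdist G z y)
    (hd1 : 0 < hdist G x z) (hd2 : 0 < hdist G z y)
    (K : V → V → ℝ)
    (hK : ∀ u v : V, u ≠ v →
      Tendsto (fun α => kappaV G α u v / (1 - α))
        (nhdsWithin 1 (Set.Ico (0:ℝ) 1)) (nhds (K u v))) :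
    (hdist G x z / hdist G x y) * K x z + (hdist G z y / hdist G x y) * K z y ≤ K x y := by
  set d1 := hdist G x z with hd1def
  set d2 := hdist G z y with hd2def
  set D := hdist G x y with hDdef
  have hDpos : 0 < D := by rw [hD]; linarith
  have hxy : x ≠ y := by
    intro hc
    rw [hc, hdist_self] at hDdef
    rw [← hDdef] at hDpos
    exact lt_irrefl _ hDpos
  haveI := F_neBot
  have hev : ∀ᶠ α in nhdsWithin (1:ℝ) (Set.Ico (0:ℝ) 1),
      (d1 / D) * (kappaV G α x z / (1 - α)) + (d2 / D) * (kappaV G α z y / (1 - α)) ≤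
        kappaV G α x y / (1 - α) := by
    have hIoi : Set.Ioi (0:ℝ) ∈ nhds (1:ℝ) := Ioi_mem_nhds (by norm_num)
    filter_upwards [self_mem_nhdsWithin, mem_nhdsWithin_of_mem_nhds hIoi] with α hα hα0
    have hαIoo : α ∈ Set.Ioo (0:ℝ) 1 := ⟨hα0, hα.2⟩
    have hA : (0:ℝ) < 1 - α := by linarith [hα.2]
    have hW : W1 G (mu G α x) (mu G α y) ≤
        W1 G (mu G α x) (mu G α z) + W1 G (mu G α z) (mu G α y) :=
      Wd_triangle (hdist_nonneg G) (hdist_triangle G hconn)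
        (hcpl α hαIoo x z) (hcpl α hαIoo z y)
    set Wxz := W1 G (mu G α x) (mu G α z)
    set Wzy := W1 G (mu G α z) (mu G α y)
    set Wxy := W1 G (mu G α x) (mu G α y)
    have key : (d1 / D) * (1 - Wxz / d1) + (d2 / D) * (1 - Wzy / d2) ≤ 1 - Wxy / D := by
      have hL : (d1 / D) * (1 - Wxz / d1) + (d2 / D) * (1 - Wzy / d2)
          = 1 - (Wxz + Wzy) / D := by
        field_simp
        ring_nf
        rw [hD]
        ring
      rw [hL]
      have : Wxy / D ≤ (Wxz + Wzy) / D := (div_le_div_iff_of_pos_right hDpos).2 hW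
      linarith
    have hrw : (d1 / D) * (kappaV G α x z / (1 - α)) + (d2 / D) * (kappaV G α z y / (1 - α))
        = ((d1 / D) * kappaV G α x z + (d2 / D) * kappaV G α z y) / (1 - α) := by ring
    rw [hrw]
    rw [kappaV, kappaV, kappaV, ← hd1def, ← hd2def, ← hDdef]
    exact (div_le_div_iff_of_pos_right hA).2 key
  have hL : Tendsto (fun α => (d1 / D) * (kappaV G α x z / (1 - α)) +
      (d2 / D) * (kappaV G α z y / (1 - α))) (nhdsWithin (1:ℝ) (Set.Ico (0:ℝ) 1))
      (nhds ((d1 / D) * K x z + (d2 / D) * K z y)) :=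
    ((hK x z hxz).const_mul _).add ((hK z y hzy).const_mul _)
  exact le_of_tendsto_of_tendsto hL (hK x y hxy) hev

end Main

/-- a lower curvature bound on well-transported pairs extends to all pairs. -/
theorem stmt5 (G : UHyp V) (hconn : UConnected G) (C : ℝ) (K : V → V → ℝ)
    (hK : ∀ u v : V, u ≠ v →
      Tendsto (fun α => kappaV G α u v / (1 - α)) (nhdsWithin 1 (Set.Ico (0:ℝ) 1)) (nhds (K u v)))
    (hWT : ∀ u v : V, u ≠ v → ∀ h ∈ G.E, u ∈ h → v ∈ h → hdist G u v = G.w h → C ≤ K u v) :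
    ∀ x y : V, x ≠ y → C ≤ K x y := by
  have Teq : ∀ u v : V, Tm G u = Tm G v := by
    intro u v
    by_cases huv : u = v
    · rw [huv]
    · exact Tm_eq_of_tendsto G huv (hK u v huv)
  have hcpl : ∀ α ∈ Set.Ioo (0:ℝ) 1, ∀ u v : V,
      ∃ π, IsCoupling (mu G α u) (mu G α v) π := by
    intro α hα u v
    have hαI : α ∈ Set.Icc (0:ℝ) 1 := ⟨hα.1.le, hα.2.le⟩
    apply exists_coupling (mu_nonneg G hαI u) (mu_nonneg G hαI v) ?_ (mass_pos G hα u)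
    rw [mass_eq, mass_eq, Teq u v]
  have main : ∀ (γ : List (Finset V)) (x y : V), x ≠ y → IsHyperpath G γ x y →
      (γ.map G.w).sum = hdist G x y → C ≤ K x y := by
    intro γ
    induction γ with
    | nil => intro x y _ hp _; exact absurd rfl hp.1
    | cons h rest ih =>
      intro x y hxy hp hsum
      have hhE : h ∈ G.E := hp.2.1 h (by simp)
      have hx : x ∈ h := hp.2.2.1 h rfl
      by_cases hrest : rest = []
      · subst hrest
        have hy : y ∈ h := hp.2.2.2.1 h rfl
        have hd : hdist G x y = G.w h := by simpa using hsum.symm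
        exact hWT x y hxy h hhE hx hy hd
      · obtain ⟨h2, rest', hr2⟩ := List.exists_cons_of_ne_nil hrest
        have hchain := hp.2.2.2.2
        have hzne : (h ∩ h2).Nonempty := by
          rw [hr2] at hchain
          exact (List.isChain_cons_cons.1 hchain).1
        obtain ⟨z, hzmem⟩ := hzne
        have hzh : z ∈ h := (Finset.mem_inter.1 hzmem).1
        have hzh2 : z ∈ h2 := (Finset.mem_inter.1 hzmem).2
        have hlast : (h :: rest).getLast? = rest.getLast? := by
          rw [show h :: rest = [h] ++ rest from rfl, List.getLast?_append_of_ne_nil _ hrest]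
        have hrestpath : IsHyperpath G rest z y := by
          refine ⟨hrest, fun g hg => hp.2.1 g (by simp [hg]), ?_, ?_, ?_⟩
          · intro h0 hh0; rw [hr2] at hh0; simp at hh0; rw [← hh0]; exact hzh2
          · intro hl hhl
            exact hp.2.2.2.1 hl (by rw [hlast]; exact hhl)
          · rw [hr2] at hchain ⊢
            exact (List.isChain_cons_cons.1 hchain).2
        set s2 := (rest.map G.w).sum with hs2
        have hs2pos : 0 < s2 := path_sum_pos G hrest (fun g hg => hp.2.1 g (by simp [hg]))
        have hwpos : 0 < G.w h := G.pos h hhE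
        have hsum' : G.w h + s2 = hdist G x y := by
          rw [← hsum]; simp [hs2]
        have hdxz : hdist G x z ≤ G.w h := hdist_le_w G hhE hx hzh
        have hdzy : hdist G z y ≤ s2 := hdist_le_path G hrestpath
        have htri : hdist G x y ≤ hdist G x z + hdist G z y := hdist_triangle G hconn x z y
        have hd0a := hdist_nonneg G x z
        have hd0b := hdist_nonneg G z y
        have e1 : hdist G x z = G.w h := by linarith
        have e2 : hdist G z y = s2 := by linarith
        have hxz : x ≠ z := by
          intro hc; rw [← hc, hdist_self] at e1; linarith
        have hzy : z ≠ y := by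
          intro hc; rw [hc, hdist_self] at e2; linarith
        have hKzy : C ≤ K z y := ih z y hzy hrestpath e2.symm
        have hKxz : C ≤ K x z := hWT x z hxz h hhE hx hzh e1
        have hcomb := curvature_combine G hconn hxz hzy hcpl
          (by linarith : hdist G x y = hdist G x z + hdist G z y)
          (by linarith) (by linarith) K hK
        have hD : 0 < hdist G x y := by linarith
        have l1 : 0 ≤ hdist G x z / hdist G x y := div_nonneg (by linarith) hD.le
        have l2 : 0 ≤ hdist G z y / hdist G x y := div_nonneg (by linarith) hD.le
        have hlam : hdist G x z / hdist G x y + hdist G z y / hdist G x y = 1 := by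
          rw [← add_div]
          rw [show hdist G x z + hdist G z y = hdist G x y by linarith]
          exact div_self hD.ne'
        have m1 : (hdist G x z / hdist G x y) * C ≤ (hdist G x z / hdist G x y) * K x z :=
          mul_le_mul_of_nonneg_left hKxz l1
        have m2 : (hdist G z y / hdist G x y) * C ≤ (hdist G z y / hdist G x y) * K z y :=
          mul_le_mul_of_nonneg_left hKzy l2
        have hsumC : hdist G x z / hdist G x y * C + hdist G z y / hdist G x y * C = C := by
          rw [← add_mul, hlam, one_mul]
        linarith
  intro x y hxy
  obtain ⟨γ, hγ, hγsum⟩ := exists_optimal_path G hconn hxy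
  exact main γ x y hxy hγ hγsum
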